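/- Let N₁, …, Nₙ be commuting linear operators on a finite-dimensional inner product space V, let α > 0, and let y_j(m) (j = 1,…,n, m ∈ ℕ) be sequences of real numbers. Suppose b(m) ∈ V is a sequence such that ‖b(m)‖ + Σ_{j=1}^n e^{α y_j(m)} ‖N_j b(m)‖ is bounded (b(m) is 'harmless'). Then there exists β > 0 and a decomposition b(m) = b₀(m) + b₁(m) + … + bₙ(m) such that b_k(m) ∈ ker N₁ ∩ … ∩ ker N_k for each k, and ‖b_k(m)‖ ≤ C·e^{-β y_{k+1}(m)} for a constant C (with the convention y_{n+1}(m) = 0). -/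

import Mathlib

/-- Distance to the kernel is controlled by the norm of the image, in finite dimension. -/
lemma stmt4_aux_dist_ker {V F : Type*} [NormedAddCommGroup V] [InnerProductSpace ℝ V]
    [FiniteDimensional ℝ V] [NormedAddCommGroup F] [NormedSpace ℝ F]
    (T : V →ₗ[ℝ] F) :
    ∃ c : ℝ, 0 ≤ c ∧ ∀ v : V,
      ‖v - (Submodule.orthogonalProjectionOnto (LinearMap.ker T) v : V)‖ ≤ c * ‖T v‖ := by
  set K := LinearMap.ker T with hK
  have hker : LinearMap.ker (T.comp (Kᗮ.subtype)) = ⊥ := by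
    rw [LinearMap.ker_eq_bot']
    intro x hx
    have hxK : (x : V) ∈ K := by
      simpa [K, LinearMap.mem_ker] using hx
    have hxO : (x : V) ∈ Kᗮ := x.2
    have : (x : V) = 0 := by
      have := (Submodule.mem_orthogonal K (x : V)).1 hxO (x : V) hxK
      simpa [inner_self_eq_zero] using this
    exact Subtype.ext this
  obtain ⟨c, hc0, hc⟩ := (T.comp (Kᗮ.subtype)).exists_antilipschitzWith hker
  refine ⟨c, c.coe_nonneg, fun v => ?_⟩
  set w : V := v - (Submodule.orthogonalProjectionOnto K v : V) with hw
  have hwO : w ∈ Kᗮ := Submodule.sub_starProjection_mem_orthogonal v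
  have h1 : ‖(⟨w, hwO⟩ : Kᗮ)‖ ≤ c * ‖(T.comp (Kᗮ.subtype)) ⟨w, hwO⟩‖ := by
    have := hc.le_mul_dist (⟨w, hwO⟩ : Kᗮ) 0
    simpa [dist_eq_norm] using this
  have h2 : (T.comp (Kᗮ.subtype)) ⟨w, hwO⟩ = T v := by
    have hmem : (Submodule.orthogonalProjectionOnto K v : V) ∈ K := (Submodule.orthogonalProjectionOnto K v).2
    have : T ((Submodule.orthogonalProjectionOnto K v : V)) = 0 := by
      exact LinearMap.mem_ker.mp hmem
    simp [hw, map_sub, this, -Submodule.coe_orthogonalProjectionOnto_apply]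
  rw [h2] at h1
  simpa using h1

/-- minimum of `Y 0, …, Y (k-1)` (junk value `0` for `k = 0`). -/
noncomputable def stmt4_mu (Y : ℕ → ℝ) : ℕ → ℝ
  | 0 => 0
  | (k+1) => if k = 0 then Y 0 else min (stmt4_mu Y k) (Y k)

lemma stmt4_mu_le (Y : ℕ → ℝ) : ∀ k j, j < k → stmt4_mu Y k ≤ Y j := by
  intro k
  induction k with
  | zero => omega
  | succ k ih =>
    intro j hj
    rcases Nat.eq_or_lt_of_le (Nat.lt_succ_iff.mp hj) with rfl | hj'
    · rcases Nat.eq_zero_or_pos j with rfl | hpos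
      · simp [stmt4_mu]
      · simp only [stmt4_mu, if_neg (Nat.pos_iff_ne_zero.mp hpos)]
        exact min_le_right _ _
    · have hk : k ≠ 0 := by omega
      simp only [stmt4_mu, if_neg hk]
      exact le_trans (min_le_left _ _) (ih j hj')

lemma stmt4_le_mu (Y : ℕ → ℝ) (r : ℝ) : ∀ k, 0 < k → (∀ j, j < k → r ≤ Y j) → r ≤ stmt4_mu Y k := by
  intro k
  induction k with
  | zero => omega
  | succ k ih =>
    intro _ h
    rcases Nat.eq_zero_or_pos k with rfl | hpos
    · simpa [stmt4_mu] using h 0 (by omega)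
    · simp only [stmt4_mu, if_neg (Nat.pos_iff_ne_zero.mp hpos)]
      exact le_min (ih hpos fun j hj => h j (by omega)) (h k (by omega))

/-- index `k` is selected -/
def stmt4_sel (n : ℕ) (Y : ℕ → ℝ) (k : ℕ) : Prop :=
  k = 0 ∨ k = n ∨ (0 < k ∧ k < n ∧ 2 * Y k < stmt4_mu Y k)

open Classical in
/-- the next selected index after `k` (capped suitably). -/
noncomputable def stmt4_nxt (n : ℕ) (Y : ℕ → ℝ) (k : ℕ) : ℕ :=
  Nat.find (show ∃ j, k < j ∧ (stmt4_sel n Y j ∨ n ≤ j) from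
    ⟨k + 1 + n, by omega, Or.inr (by omega)⟩)

open Classical in
lemma stmt4_nxt_spec (n : ℕ) (Y : ℕ → ℝ) (k : ℕ) :
    k < stmt4_nxt n Y k ∧ (stmt4_sel n Y (stmt4_nxt n Y k) ∨ n ≤ stmt4_nxt n Y k) := by
  unfold stmt4_nxt
  exact Nat.find_spec (p := fun j => k < j ∧ (stmt4_sel n Y j ∨ n ≤ j))
    ⟨k + 1 + n, by omega, Or.inr (by omega)⟩

open Classical in
lemma stmt4_nxt_min (n : ℕ) (Y : ℕ → ℝ) (k j : ℕ) (h1 : k < j) (h2 : j < stmt4_nxt n Y k) :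
    ¬ stmt4_sel n Y j ∧ j < n := by
  have := Nat.find_min (m := j)
    (show ∃ j, k < j ∧ (stmt4_sel n Y j ∨ n ≤ j) from ⟨k + 1 + n, by omega, Or.inr (by omega)⟩) h2
  push_neg at this
  obtain ⟨hs, hn⟩ := this h1
  exact ⟨hs, by omega⟩

open Classical in
lemma stmt4_nxt_le (n : ℕ) (Y : ℕ → ℝ) (k : ℕ) (hk : k < n) : stmt4_nxt n Y k ≤ n :=
  Nat.find_le ⟨hk, Or.inr le_rfl⟩

open Classical in
lemma stmt4_nxt_le' (n : ℕ) (Y : ℕ → ℝ) (k : ℕ) (hk : k ≤ n) : stmt4_nxt n Y k ≤ n + 1 :=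
  Nat.find_le ⟨by omega, Or.inr (by omega)⟩

/-- Main combinatorial estimate: all indices before the next selected index have
`Y` values not much smaller than `Y k`. -/
lemma stmt4_sel_bound (n : ℕ) (Y : ℕ → ℝ) (k : ℕ) (hk : stmt4_sel n Y k) (hkn : k < n)
    (hYk : 0 < Y k) :
    ∀ j, j < stmt4_nxt n Y k → Y k ≤ 2 ^ n * Y j ∧ 0 < Y j := by
  have h2n : (1:ℝ) ≤ 2 ^ n := one_le_pow₀ (by norm_num)
  have hprev : ∀ s, s < k → Y k ≤ Y s := by
    intro s hs
    rcases hk with h0 | hn | ⟨_, _, hsel⟩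
    · omega
    · omega
    · have := stmt4_mu_le Y k s hs
      linarith
  have main : ∀ j, k ≤ j → j < stmt4_nxt n Y k → Y k ≤ 2 ^ (j - k) * Y j ∧ 0 < Y j := by
    intro j
    induction j using Nat.strong_induction_on with
    | _ j ih =>
      intro hkj hjn
      rcases Nat.eq_or_lt_of_le hkj with rfl | hkj'
      · refine ⟨by simpa using le_rfl, hYk⟩
      · obtain ⟨hnsel, hjltn⟩ := stmt4_nxt_min n Y k j hkj' hjn
        have hmu : stmt4_mu Y j ≤ 2 * Y j := by
          unfold stmt4_sel at hnsel
          push_neg at hnsel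
          have := (hnsel.2.2 (by omega) hjltn)
          linarith
        have hpow : (0:ℝ) < 2 ^ (j - 1 - k) := by positivity
        have hall : ∀ s, s < j → Y k / 2 ^ (j - 1 - k) ≤ Y s := by
          intro s hs
          rcases Nat.lt_or_ge s k with hsk | hks
          · have h1 := hprev s hsk
            have h1e : (1:ℝ) ≤ 2 ^ (j - 1 - k) := one_le_pow₀ (by norm_num)
            have : Y k / 2 ^ (j - 1 - k) ≤ Y k := by
              rw [div_le_iff₀ hpow]
              exact le_mul_of_one_le_right hYk.le h1e
            linarith
          · obtain ⟨h1, h2⟩ := ih s hs hks (by omega)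
            have hple : (2:ℝ) ^ (s - k) ≤ 2 ^ (j - 1 - k) :=
              pow_le_pow_right₀ (by norm_num) (by omega)
            rw [div_le_iff₀ hpow]
            calc Y k ≤ 2 ^ (s - k) * Y s := h1
              _ ≤ 2 ^ (j - 1 - k) * Y s := by nlinarith
              _ = Y s * 2 ^ (j - 1 - k) := by ring
        have hmu2 : Y k / 2 ^ (j - 1 - k) ≤ stmt4_mu Y j :=
          stmt4_le_mu Y _ j (by omega) hall
        have hYj : Y k ≤ 2 ^ (j - k) * Y j := by
          have hjk : j - k = (j - 1 - k) + 1 := by omega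
          rw [hjk, pow_succ]
          have := le_trans hmu2 hmu
          rw [div_le_iff₀ hpow] at this
          nlinarith
        refine ⟨hYj, ?_⟩
        by_contra h
        push_neg at h
        have : (0:ℝ) < 2 ^ (j - k) := by positivity
        nlinarith
  intro j hj
  rcases Nat.lt_or_ge j k with hjk | hkj
  · have h1 := hprev j hjk
    have h2 : 0 < Y j := lt_of_lt_of_le hYk h1
    exact ⟨by nlinarith, h2⟩
  · obtain ⟨h1, h2⟩ := main j hkj hj
    have hple : (2:ℝ) ^ (j - k) ≤ 2 ^ n := by
      apply pow_le_pow_right₀ (by norm_num)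
      have := stmt4_nxt_le n Y k hkn
      omega
    exact ⟨by nlinarith, h2⟩

lemma stmt4_sel_zero (n : ℕ) (Y : ℕ → ℝ) : stmt4_sel n Y 0 := Or.inl rfl
lemma stmt4_sel_n (n : ℕ) (Y : ℕ → ℝ) : stmt4_sel n Y n := Or.inr (Or.inl rfl)

set_option maxHeartbeats 1000000

/-- A harmless sequence `b(m)` (i.e. `‖b(m)‖ + ∑ⱼ e^{α yⱼ(m)}‖Nⱼ b(m)‖`
bounded) with respect to commuting operators `N₁,…,Nₙ` decomposes as
`b(m) = b₀(m) + … + bₙ(m)` with `b_k(m) ∈ ker N₁ ∩ … ∩ ker N_k` and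
`‖b_k(m)‖ ≤ C e^{-β y_{k+1}(m)}` (with the convention `y_{n+1}(m) = 0`). -/
theorem stmt_4 {V : Type*} [NormedAddCommGroup V] [InnerProductSpace ℝ V]
    [FiniteDimensional ℝ V]
    {n : ℕ} (N : Fin n → (V →ₗ[ℝ] V))
    (hcomm : ∀ i j, N i ∘ₗ N j = N j ∘ₗ N i)
    (α : ℝ) (hα : 0 < α) (y : Fin n → ℕ → ℝ) (b : ℕ → V)
    (C : ℝ) (hb : ∀ m : ℕ, ‖b m‖ + ∑ j, Real.exp (α * y j m) * ‖N j (b m)‖ ≤ C) :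
    ∃ β : ℝ, 0 < β ∧ ∃ C' : ℝ, ∃ bb : Fin (n + 1) → ℕ → V,
      (∀ m : ℕ, b m = ∑ k, bb k m) ∧
      (∀ (k : Fin (n + 1)) (m : ℕ) (j : Fin n), (j : ℕ) < (k : ℕ) → N j (bb k m) = 0) ∧
      (∀ (k : Fin (n + 1)) (m : ℕ),
        ‖bb k m‖ ≤ C' * Real.exp (-β * (if h : (k : ℕ) < n then y ⟨k, h⟩ m else 0))) := by
  classical
  set Y : ℕ → ℕ → ℝ := fun m k => if h : k < n then y ⟨k, h⟩ m else 0 with hYdef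
  clear_value Y
  set T : ℕ → (V →ₗ[ℝ] (Fin n → V)) :=
    fun k => LinearMap.pi fun j => if (j : ℕ) < k then N j else 0 with hTdef
  clear_value T
  have hTapp : ∀ (k : ℕ) (v : V) (j : Fin n), T k v j = if (j : ℕ) < k then N j v else 0 := by
    intro k v j
    simp only [hTdef, LinearMap.pi_apply]
    split <;> simp
  have hWmem : ∀ (k : ℕ) (v : V), v ∈ LinearMap.ker (T k) ↔
      ∀ j : Fin n, (j : ℕ) < k → N j v = 0 := by
    intro k v
    rw [LinearMap.mem_ker]
    constructor
    · intro h j hj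
      have := congrFun h j
      rw [hTapp, if_pos hj] at this
      simpa using this
    · intro h
      funext j
      rw [hTapp]
      split
      · exact h j ‹_›
      · simp
  have hWmono : ∀ k k', k ≤ k' → LinearMap.ker (T k') ≤ LinearMap.ker (T k) := by
    intro k k' h v hv
    rw [hWmem] at hv ⊢
    exact fun j hj => hv j (lt_of_lt_of_le hj h)
  set Q : ℕ → ℕ → V :=
    fun m k => if k ≤ n then ((Submodule.orthogonalProjectionOnto (LinearMap.ker (T k)) (b m) : V)) else 0
    with hQdef
  clear_value Q
  choose cf hcf0 hcf using fun k => stmt4_aux_dist_ker (T k)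
  set c : ℝ := ∑ k ∈ Finset.range (n + 2), cf k with hcdef
  clear_value c
  have hc0 : 0 ≤ c := by
    rw [hcdef]
    exact Finset.sum_nonneg fun k _ => hcf0 k
  have hck : ∀ k, k ≤ n + 1 → cf k ≤ c := by
    intro k hk
    rw [hcdef]
    exact Finset.single_le_sum (fun i _ => hcf0 i) (Finset.mem_range.mpr (by omega))
  have hC0 : 0 ≤ C := le_trans (by positivity) (hb 0)
  have hNb : ∀ (m : ℕ) (j : Fin n), ‖N j (b m)‖ ≤ C * Real.exp (-(α * y j m)) := by
    intro m j
    have hterm : Real.exp (α * y j m) * ‖N j (b m)‖ ≤ C := by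
      have h1 : Real.exp (α * y j m) * ‖N j (b m)‖
          ≤ ∑ i, Real.exp (α * y i m) * ‖N i (b m)‖ :=
        Finset.single_le_sum (f := fun i => Real.exp (α * y i m) * ‖N i (b m)‖)
          (fun i _ => by positivity) (Finset.mem_univ j)
      have h2 := hb m
      have h3 : (0:ℝ) ≤ ‖b m‖ := norm_nonneg _
      linarith
    have hexp : (0:ℝ) < Real.exp (α * y j m) := Real.exp_pos _
    rw [Real.exp_neg, mul_comm, inv_mul_eq_div, le_div_iff₀ hexp]
    calc ‖N j (b m)‖ * Real.exp (α * y j m)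
        = Real.exp (α * y j m) * ‖N j (b m)‖ := by ring
      _ ≤ C := hterm
  have hTnorm : ∀ (v : V) (k : ℕ) (r : ℝ), 0 ≤ r →
      (∀ j : Fin n, (j : ℕ) < k → ‖N j v‖ ≤ r) → ‖T k v‖ ≤ r := by
    intro v k r hr h
    rw [pi_norm_le_iff_of_nonneg hr]
    intro j
    rw [hTapp]
    split
    · exact h j ‹_›
    · simpa using hr
  have hTmono : ∀ (v : V) (k k' : ℕ), k ≤ k' → ‖T k v‖ ≤ ‖T k' v‖ := by
    intro v k k' hkk
    rw [pi_norm_le_iff_of_nonneg (norm_nonneg _)]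
    intro j
    rw [hTapp]
    split
    · rename_i h
      have h' : (j : ℕ) < k' := lt_of_lt_of_le h hkk
      calc ‖N j v‖ = ‖T k' v j‖ := by rw [hTapp, if_pos h']
        _ ≤ ‖T k' v‖ := norm_le_pi_norm _ j
    · simp
  have hQmem : ∀ (m k t : ℕ), k ≤ t → Q m t ∈ LinearMap.ker (T k) := by
    intro m k t ht
    by_cases h : t ≤ n
    · have hq : Q m t = ((Submodule.orthogonalProjectionOnto (LinearMap.ker (T t)) (b m) : V)) := by
        simp [hQdef, h]
      rw [hq]
      exact hWmono k t ht (Submodule.orthogonalProjectionOnto (LinearMap.ker (T t)) (b m)).2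
    · have hq : Q m t = 0 := by simp [hQdef, h]
      rw [hq]; exact zero_mem _
  have hQdist : ∀ (m k : ℕ), k ≤ n → ‖b m - Q m k‖ ≤ cf k * ‖T k (b m)‖ := by
    intro m k hk
    have hq : Q m k = ((Submodule.orthogonalProjectionOnto (LinearMap.ker (T k)) (b m) : V)) := by
      simp [hQdef, hk]
    rw [hq]
    exact hcf k (b m)
  have hQnorm : ∀ (m t : ℕ), ‖Q m t‖ ≤ ‖b m‖ := by
    intro m t
    by_cases h : t ≤ n
    · have hq : Q m t = ((Submodule.orthogonalProjectionOnto (LinearMap.ker (T t)) (b m) : V)) := by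
        simp [hQdef, h]
      rw [hq]
      calc ‖((Submodule.orthogonalProjectionOnto (LinearMap.ker (T t)) (b m) : V))‖
          = ‖Submodule.orthogonalProjectionOnto (LinearMap.ker (T t)) (b m)‖ := rfl
        _ ≤ ‖Submodule.orthogonalProjectionOnto (LinearMap.ker (T t))‖ * ‖b m‖ :=
            ContinuousLinearMap.le_opNorm _ _
        _ ≤ 1 * ‖b m‖ :=
            mul_le_mul_of_nonneg_right (Submodule.orthogonalProjectionOnto_norm_le _) (norm_nonneg _)
        _ = ‖b m‖ := one_mul _
    · have hq : Q m t = 0 := by simp [hQdef, h]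
      rw [hq]; simp
  set bbN : ℕ → ℕ → V :=
    fun m k => if stmt4_sel n (Y m) k then Q m k - Q m (stmt4_nxt n (Y m) k) else 0
    with hbbNdef
  clear_value bbN
  have hsum : ∀ (m d k : ℕ), k + d = n + 1 → (stmt4_sel n (Y m) k ∨ k = n + 1) →
      ∑ j ∈ Finset.Ico k (n + 1), bbN m j = Q m k := by
    intro m d
    induction d using Nat.strong_induction_on with
    | _ d ih =>
      intro k hkd hselk
      rcases Nat.eq_zero_or_pos d with rfl | hd
      · have hk : k = n + 1 := by omega
        subst hk
        have hq : Q m (n + 1) = 0 := by simp [hQdef]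
        simp [hq]
      · have hkn : k ≤ n := by omega
        have hsel : stmt4_sel n (Y m) k := by
          rcases hselk with h | h
          · exact h
          · omega
        obtain ⟨hka, hsa⟩ := stmt4_nxt_spec n (Y m) k
        have han1 : stmt4_nxt n (Y m) k ≤ n + 1 := stmt4_nxt_le' n (Y m) k hkn
        set a := stmt4_nxt n (Y m) k with hadef
        clear_value a
        have hsa' : stmt4_sel n (Y m) a ∨ a = n + 1 := by
          rcases hsa with h | h
          · exact Or.inl h
          · rcases Nat.eq_or_lt_of_le h with h' | h'
            · exact Or.inl (h' ▸ stmt4_sel_n n (Y m))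
            · omega
        have hsplit1 : ∑ j ∈ Finset.Ico k (n + 1), bbN m j
            = bbN m k + ∑ j ∈ Finset.Ico (k + 1) (n + 1), bbN m j :=
          Finset.sum_eq_sum_Ico_succ_bot (by omega) _
        have hsplit2 : ∑ j ∈ Finset.Ico (k + 1) a, bbN m j
              + ∑ j ∈ Finset.Ico a (n + 1), bbN m j
            = ∑ j ∈ Finset.Ico (k + 1) (n + 1), bbN m j :=
          Finset.sum_Ico_consecutive _ (by omega) han1
        have hzero : ∑ j ∈ Finset.Ico (k + 1) a, bbN m j = 0 := by
          apply Finset.sum_eq_zero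
          intro j hj
          rw [Finset.mem_Ico] at hj
          have hns := (stmt4_nxt_min n (Y m) k j (by omega) (by rw [← hadef]; omega)).1
          simp [hbbNdef, hns]
        have hrest : ∑ j ∈ Finset.Ico a (n + 1), bbN m j = Q m a :=
          ih (n + 1 - a) (by omega) a (by omega) hsa'
        have hbbk : bbN m k = Q m k - Q m a := by
          simp only [hbbNdef]
          rw [if_pos hsel, ← hadef]
        rw [hsplit1, ← hsplit2, hzero, hrest, hbbk]
        abel
  refine ⟨α / 2 ^ n, by positivity, 2 * C * c + 2 * C, fun k m => bbN m ↑k, ?_, ?_, ?_⟩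
  · -- sum
    intro m
    have h0 := hsum m (n + 1) 0 (by omega) (Or.inl (stmt4_sel_zero n (Y m)))
    have hQ0 : Q m 0 = b m := by
      have hbm : b m ∈ LinearMap.ker (T 0) := by
        rw [hWmem]
        intro j hj
        omega
      have hq : Q m 0 = ((Submodule.orthogonalProjectionOnto (LinearMap.ker (T 0)) (b m) : V)) := by
        simp [hQdef]
      rw [hq]
      exact Submodule.starProjection_eq_self_iff.mpr hbm
    calc b m = Q m 0 := hQ0.symm
      _ = ∑ j ∈ Finset.Ico 0 (n + 1), bbN m j := h0.symm
      _ = ∑ j ∈ Finset.range (n + 1), bbN m j := by rw [Finset.range_eq_Ico]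
      _ = ∑ k : Fin (n + 1), bbN m ↑k := (Fin.sum_univ_eq_sum_range _ _).symm
  · -- kernels
    intro k m j hj
    show N j (bbN m ↑k) = 0
    by_cases hsel : stmt4_sel n (Y m) ↑k
    · have h1 : bbN m ↑k = Q m ↑k - Q m (stmt4_nxt n (Y m) ↑k) := by
        simp only [hbbNdef]
        rw [if_pos hsel]
      have hm1 : Q m ↑k ∈ LinearMap.ker (T ↑k) := hQmem m ↑k ↑k le_rfl
      have hm2 : Q m (stmt4_nxt n (Y m) ↑k) ∈ LinearMap.ker (T ↑k) :=
        hQmem m ↑k _ (le_of_lt (stmt4_nxt_spec n (Y m) ↑k).1)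
      have hmem := Submodule.sub_mem _ hm1 hm2
      rw [← h1] at hmem
      exact (hWmem ↑k _).1 hmem j hj
    · simp [hbbNdef, hsel]
  · -- norm bound
    intro k m
    have hYg : (if h : (k : ℕ) < n then y ⟨(k : ℕ), h⟩ m else 0) = Y m ↑k := by
      rw [hYdef]
    rw [hYg]
    by_cases hsel : stmt4_sel n (Y m) ↑k
    · obtain ⟨hka, hsa⟩ := stmt4_nxt_spec n (Y m) ↑k
      set a := stmt4_nxt n (Y m) ↑k with hadef
      clear_value a
      have hbbk : bbN m ↑k = Q m ↑k - Q m a := by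
        simp only [hbbNdef]
        rw [if_pos hsel, ← hadef]
      have hkn1 : (k : ℕ) ≤ n := by omega
      by_cases hpos : 0 < Y m ↑k
      · have hklt : (k : ℕ) < n := by
          by_contra h
          have hy0 : Y m ↑k = 0 := by simp [hYdef, h]
          linarith
        have haln : a ≤ n := by
          rw [hadef]; exact stmt4_nxt_le n (Y m) ↑k hklt
        have hd1 : ‖b m - Q m ↑k‖ ≤ cf ↑k * ‖T ↑k (b m)‖ := hQdist m ↑k hkn1
        have hd2 : ‖b m - Q m a‖ ≤ cf a * ‖T a (b m)‖ := hQdist m a haln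
        have hTle : ‖T ↑k (b m)‖ ≤ ‖T a (b m)‖ := hTmono (b m) ↑k a hka.le
        have hTa : ‖T a (b m)‖ ≤ C * Real.exp (-(α / 2 ^ n) * Y m ↑k) := by
          apply hTnorm _ _ _ (by positivity)
          intro j hj
          obtain ⟨h1, h2⟩ := stmt4_sel_bound n (Y m) ↑k hsel hklt hpos ↑j
            (by rw [← hadef]; exact hj)
          have hYj : Y m ↑j = y j m := by simp [hYdef, j.isLt]
          have hle : -(α * y j m) ≤ -(α / 2 ^ n) * Y m ↑k := by
            rw [← hYj]
            have h2n : (0:ℝ) < 2 ^ n := by positivity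
            rw [neg_mul, neg_le_neg_iff]
            rw [div_mul_eq_mul_div, div_le_iff₀ h2n]
            calc α * Y m ↑k ≤ α * (2 ^ n * Y m ↑j) := by nlinarith
              _ = α * Y m ↑j * 2 ^ n := by ring
          calc ‖N j (b m)‖ ≤ C * Real.exp (-(α * y j m)) := hNb m j
            _ ≤ C * Real.exp (-(α / 2 ^ n) * Y m ↑k) :=
                mul_le_mul_of_nonneg_left (Real.exp_le_exp.mpr hle) hC0
        have hexp0 : (0:ℝ) < Real.exp (-(α / 2 ^ n) * Y m ↑k) := Real.exp_pos _
        calc ‖bbN m ↑k‖ = ‖(b m - Q m a) - (b m - Q m ↑k)‖ := by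
              rw [hbbk]; congr 1; abel
          _ ≤ ‖b m - Q m a‖ + ‖b m - Q m ↑k‖ := norm_sub_le _ _
          _ ≤ cf a * ‖T a (b m)‖ + cf ↑k * ‖T a (b m)‖ := by
              have h4 := mul_le_mul_of_nonneg_left hTle (hcf0 ↑k)
              linarith
          _ ≤ c * ‖T a (b m)‖ + c * ‖T a (b m)‖ := by
              have h1 := hck a (by omega)
              have h2 := hck ↑k (by omega)
              have h3 : (0:ℝ) ≤ ‖T a (b m)‖ := norm_nonneg _
              nlinarith
          _ = 2 * c * ‖T a (b m)‖ := by ring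
          _ ≤ 2 * c * (C * Real.exp (-(α / 2 ^ n) * Y m ↑k)) := by nlinarith
          _ ≤ (2 * C * c + 2 * C) * Real.exp (-(α / 2 ^ n) * Y m ↑k) := by nlinarith
      · push_neg at hpos
        have hQn1 : ‖Q m ↑k‖ ≤ ‖b m‖ := hQnorm m ↑k
        have hQn2 : ‖Q m a‖ ≤ ‖b m‖ := hQnorm m a
        have hbmC : ‖b m‖ ≤ C := by
          have h1 := hb m
          have h2 : (0:ℝ) ≤ ∑ j, Real.exp (α * y j m) * ‖N j (b m)‖ := by positivity
          linarith
        have hexp1 : (1:ℝ) ≤ Real.exp (-(α / 2 ^ n) * Y m ↑k) := by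
          rw [show (1:ℝ) = Real.exp 0 from (Real.exp_zero).symm]
          apply Real.exp_le_exp.mpr
          have hβ : (0:ℝ) < α / 2 ^ n := by positivity
          nlinarith
        calc ‖bbN m ↑k‖ ≤ ‖Q m ↑k‖ + ‖Q m a‖ := by
              rw [hbbk]; exact norm_sub_le _ _
          _ ≤ 2 * C := by linarith
          _ ≤ (2 * C * c + 2 * C) * 1 := by nlinarith [mul_nonneg hC0 hc0]
          _ ≤ (2 * C * c + 2 * C) * Real.exp (-(α / 2 ^ n) * Y m ↑k) := by
              have h5 : 0 ≤ 2 * C * c + 2 * C := by nlinarith [mul_nonneg hC0 hc0]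
              nlinarith [mul_le_mul_of_nonneg_left hexp1 h5]
    · have h0 : bbN m ↑k = 0 := by simp [hbbNdef, hsel]
      have hexp0 : (0:ℝ) < Real.exp (-(α / 2 ^ n) * Y m ↑k) := Real.exp_pos _
      have h5 : 0 ≤ 2 * C * c + 2 * C := by nlinarith [mul_nonneg hC0 hc0]
      calc ‖bbN m ↑k‖ = 0 := by rw [h0, norm_zero]
        _ ≤ (2 * C * c + 2 * C) * Real.exp (-(α / 2 ^ n) * Y m ↑k) :=
            mul_nonneg h5 hexp0.le
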